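/- The quantum Fisher information is bounded by four times the variance: for every density matrix ρ, every spectral decomposition ρ = Σ_k p_k |k⟩⟨k| into an orthonormal eigenbasis, and every Hermitian matrix G of the same size, one has 2·Σ_{k,l : p_k + p_l > 0} ((p_k − p_l)²/(p_k + p_l))·|⟨k|G|l⟩|² ≤ 4·(tr(ρG²) − (tr(ρG))²). -/

import Mathlib

open Matrix Complex
open scoped ComplexOrder

/-- The quantum Fisher information of a state with spectral data `(p, v)` (eigenvalues `p k`
and orthonormal eigenvectors `v k`) with respect to a generator `G`:
`F_Q = 2 Σ_{k,l : p_k+p_l>0} ((p_k-p_l)²/(p_k+p_l)) |⟨k|G|l⟩|²`. -/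
noncomputable def qfi {n : ℕ} (p : Fin n → ℝ) (v : Fin n → (Fin n → ℂ))
    (G : Matrix (Fin n) (Fin n) ℂ) : ℝ :=
  2 * ∑ k : Fin n, ∑ l : Fin n,
    if 0 < p k + p l then
      ((p k - p l) ^ 2 / (p k + p l)) * ‖star (v k) ⬝ᵥ G.mulVec (v l)‖ ^ 2
    else 0

lemma trace_vecMulVec_mul {n : ℕ} (a b : Fin n → ℂ) (X : Matrix (Fin n) (Fin n) ℂ) :
    (Matrix.vecMulVec a b * X).trace = b ⬝ᵥ X.mulVec a := by
  simp [Matrix.trace, Matrix.mul_apply, Matrix.vecMulVec_apply, dotProduct, Matrix.mulVec,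
    Finset.mul_sum, Matrix.diag]
  rw [Finset.sum_comm]
  exact Finset.sum_congr rfl fun j _ => Finset.sum_congr rfl fun i _ => by ring

lemma completeness {n : ℕ} (v : Fin n → (Fin n → ℂ))
    (hortho : ∀ k l, star (v k) ⬝ᵥ v l = if k = l then 1 else 0) :
    ∑ k, Matrix.vecMulVec (v k) (star (v k)) = (1 : Matrix (Fin n) (Fin n) ℂ) := by
  set M : Matrix (Fin n) (Fin n) ℂ := Matrix.of fun i k => v k i with hM
  have h1 : Mᴴ * M = 1 := by
    ext k l
    simpa [hM, Matrix.mul_apply, Matrix.conjTranspose_apply, Matrix.one_apply, dotProduct]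
      using hortho k l
  have h2 : M * Mᴴ = 1 := mul_eq_one_comm.mp h1
  ext i j
  have := congrFun (congrFun h2 i) j
  simpa [hM, Matrix.sum_apply, Matrix.vecMulVec_apply, Matrix.mul_apply,
    Matrix.conjTranspose_apply] using this

lemma sandwich {n : ℕ} (a b w u : Fin n → ℂ) (X Y : Matrix (Fin n) (Fin n) ℂ) :
    u ⬝ᵥ (X * Matrix.vecMulVec a b * Y).mulVec w
      = (u ⬝ᵥ X.mulVec a) * (b ⬝ᵥ Y.mulVec w) := by
  have h : (X * Matrix.vecMulVec a b * Y).mulVec w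
      = (b ⬝ᵥ Y.mulVec w) • X.mulVec a := by
    rw [Matrix.mul_assoc, ← Matrix.mulVec_mulVec, ← Matrix.mulVec_mulVec]
    have : (Matrix.vecMulVec a b).mulVec (Y.mulVec w) = (b ⬝ᵥ Y.mulVec w) • a := by
      ext i
      simp [Matrix.mulVec, Matrix.vecMulVec_apply, dotProduct, Finset.mul_sum, mul_assoc]
      rw [Finset.sum_mul]
      exact Finset.sum_congr rfl fun j _ => by
        rw [Finset.sum_mul]; exact Finset.sum_congr rfl fun i' _ => by ring
    rw [this, Matrix.mulVec_smul]
  rw [h, dotProduct_smul, smul_eq_mul]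
  ring

lemma herm_conj {n : ℕ} (G : Matrix (Fin n) (Fin n) ℂ) (hG : G.IsHermitian)
    (a b : Fin n → ℂ) :
    star b ⬝ᵥ G.mulVec a = starRingEnd ℂ (star a ⬝ᵥ G.mulVec b) := by
  simp only [dotProduct, Matrix.mulVec, Pi.star_apply, RCLike.star_def, map_sum,
    _root_.map_mul, Complex.conj_conj, Finset.mul_sum]
  rw [Finset.sum_comm]
  refine Finset.sum_congr rfl fun i _ => Finset.sum_congr rfl fun j _ => ?_
  have hij : (starRingEnd ℂ) (G i j) = G j i := by
    conv_rhs => rw [← hG]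
    simp [Matrix.conjTranspose_apply]
  rw [hij]
  ring

/-- The quantum Fisher information is bounded by four times the variance: for every density
matrix `ρ` with spectral decomposition `ρ = Σ_k p_k |k⟩⟨k|` into an orthonormal eigenbasis,
and every Hermitian `G`, one has `F_Q(ρ,G) ≤ 4 (tr(ρG²) - (tr(ρG))²)`. -/
theorem qfi_le_four_variance {n : ℕ} (ρ G : Matrix (Fin n) (Fin n) ℂ)
    (hρ : ρ.PosSemidef) (htr : ρ.trace = 1) (hG : G.IsHermitian)
    (p : Fin n → ℝ) (v : Fin n → (Fin n → ℂ))
    (hp : ∀ k, 0 ≤ p k)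
    (hortho : ∀ k l, star (v k) ⬝ᵥ v l = if k = l then 1 else 0)
    (hdecomp : ρ = ∑ k : Fin n, (p k : ℂ) • Matrix.vecMulVec (v k) (star (v k))) :
    qfi p v G ≤ 4 * (((ρ * (G * G)).trace).re - (((ρ * G).trace).re) ^ 2) := by
  classical
  set g : Fin n → Fin n → ℂ := fun k l => star (v k) ⬝ᵥ G.mulVec (v l) with hgdef
  set A : Fin n → Fin n → ℝ := fun k l => ‖g k l‖ ^ 2 with hAdef
  set d : Fin n → ℝ := fun k => (g k k).re with hddef
  have hA0 : ∀ k l, 0 ≤ A k l := fun k l => by positivity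
  have hsym : ∀ k l, g l k = starRingEnd ℂ (g k l) := fun k l => herm_conj G hG (v k) (v l)
  have hAsym : ∀ k l, A l k = A k l := fun k l => by
    simp [hAdef, hsym k l]
  have hgkk : ∀ k, g k k = ((d k : ℝ) : ℂ) := by
    intro k
    have h := hsym k k
    have him : (g k k).im = 0 := by
      have := congrArg Complex.im h
      simp at this
      linarith
    exact Complex.ext rfl him
  have hAd : ∀ k, A k k = d k ^ 2 := by
    intro k
    rw [hAdef]
    simp only [hgkk k, Complex.sq_norm, Complex.normSq_ofReal]
    ring
  -- trace of ρ G
  have htrρG : (ρ * G).trace = ∑ k, (p k : ℂ) * g k k := by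
    rw [hdecomp, Finset.sum_mul, Matrix.trace_sum]
    exact Finset.sum_congr rfl fun k _ => by
      rw [Matrix.smul_mul, Matrix.trace_smul, trace_vecMulVec_mul, smul_eq_mul]
  have htrρGre : ((ρ * G).trace).re = ∑ k, p k * d k := by
    rw [htrρG, Complex.re_sum]
    exact Finset.sum_congr rfl fun k _ => by
      rw [hgkk k, ← Complex.ofReal_mul, Complex.ofReal_re]
  -- trace of ρ G G
  have hGG : G * G = ∑ l, G * Matrix.vecMulVec (v l) (star (v l)) * G := by
    conv_lhs => rw [show G * G = G * 1 * G by rw [mul_one]]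
    rw [← completeness v hortho, Finset.mul_sum, Finset.sum_mul]
  have htrρGG : (ρ * (G * G)).trace = ∑ k, ∑ l, (p k : ℂ) * ((A k l : ℝ) : ℂ) := by
    rw [hdecomp, hGG, Finset.sum_mul_sum, Matrix.trace_sum]
    refine Finset.sum_congr rfl fun k _ => ?_
    rw [Matrix.trace_sum]
    refine Finset.sum_congr rfl fun l _ => ?_
    rw [Matrix.smul_mul, Matrix.trace_smul, trace_vecMulVec_mul, smul_eq_mul, sandwich]
    congr 1
    have : (star (v k) ⬝ᵥ G.mulVec (v l)) * (star (v l) ⬝ᵥ G.mulVec (v k))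
        = g k l * starRingEnd ℂ (g k l) := by rw [← hsym k l]
    rw [this, Complex.mul_conj, hAdef]
    norm_cast
    exact (Complex.sq_norm _).symm
  have htrρGGre : ((ρ * (G * G)).trace).re = ∑ k, ∑ l, p k * A k l := by
    rw [htrρGG, Complex.re_sum]
    refine Finset.sum_congr rfl fun k _ => ?_
    rw [Complex.re_sum]
    exact Finset.sum_congr rfl fun l _ => by
      rw [← Complex.ofReal_mul, Complex.ofReal_re]
  -- sum of p = 1
  have hsum_p : ∑ k, p k = 1 := by
    have h1 : ρ.trace = ∑ k, (p k : ℂ) := by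
      rw [hdecomp, Matrix.trace_sum]
      refine Finset.sum_congr rfl fun k _ => ?_
      rw [Matrix.trace_smul, smul_eq_mul]
      have : (Matrix.vecMulVec (v k) (star (v k))).trace = star (v k) ⬝ᵥ v k := by
        rw [show Matrix.vecMulVec (v k) (star (v k))
            = Matrix.vecMulVec (v k) (star (v k)) * 1 by rw [mul_one], trace_vecMulVec_mul]
        simp [Matrix.mulVec_one]
      rw [this, hortho k k]
      simp
    rw [h1] at htr
    have : ((∑ k, p k : ℝ) : ℂ) = ((1 : ℝ) : ℂ) := by push_cast; simpa using htr
    exact_mod_cast this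
  -- now reduce to a real inequality
  rw [htrρGGre, htrρGre]
  unfold qfi
  have hstep1 : ∀ k l, (if 0 < p k + p l then
      ((p k - p l) ^ 2 / (p k + p l)) * ‖star (v k) ⬝ᵥ G.mulVec (v l)‖ ^ 2
      else 0) ≤ (if k = l then 0 else (p k + p l) * A k l) := by
    intro k l
    by_cases hkl : k = l
    · subst hkl
      simp
    · simp only [if_neg hkl]
      by_cases hpos : 0 < p k + p l
      · rw [if_pos hpos]
        have hq : (p k - p l) ^ 2 / (p k + p l) ≤ p k + p l := by
          rw [div_le_iff₀ hpos]
          have h1 : (p k - p l) ^ 2 ≤ (p k + p l) ^ 2 := by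
            have := hp k; have := hp l; nlinarith
          nlinarith
        have : ‖star (v k) ⬝ᵥ G.mulVec (v l)‖ ^ 2 = A k l := rfl
        rw [this]
        exact mul_le_mul_of_nonneg_right hq (hA0 k l)
      · rw [if_neg hpos]
        have := hp k; have := hp l
        have : 0 ≤ (p k + p l) * A k l := mul_nonneg (by linarith) (hA0 k l)
        linarith
  have hsum1 : (∑ k, ∑ l, if 0 < p k + p l then
      ((p k - p l) ^ 2 / (p k + p l)) * ‖star (v k) ⬝ᵥ G.mulVec (v l)‖ ^ 2
      else 0) ≤ ∑ k : Fin n, ∑ l : Fin n, (if k = l then 0 else (p k + p l) * A k l) :=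
    Finset.sum_le_sum fun k _ => Finset.sum_le_sum fun l _ => hstep1 k l
  have hsplit : (∑ k : Fin n, ∑ l : Fin n, (if k = l then 0 else (p k + p l) * A k l))
      = 2 * ∑ k : Fin n, ∑ l : Fin n, (if k = l then 0 else p k * A k l) := by
    have e1 : ∀ k l : Fin n, (if k = l then 0 else (p k + p l) * A k l)
        = (if k = l then 0 else p k * A k l) + (if k = l then 0 else p l * A k l) := by
      intro k l; by_cases h : k = l <;> simp [h] <;> ring
    simp only [e1, Finset.sum_add_distrib]
    have e2 : (∑ k : Fin n, ∑ l : Fin n, (if k = l then 0 else p l * A k l))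
        = ∑ k : Fin n, ∑ l : Fin n, (if k = l then 0 else p k * A k l) := by
      rw [Finset.sum_comm]
      refine Finset.sum_congr rfl fun k _ => Finset.sum_congr rfl fun l _ => ?_
      by_cases h : k = l
      · simp [h]
      · rw [if_neg (Ne.symm h), if_neg h, hAsym]
    rw [e2]; ring
  have hdiagsum : (∑ k : Fin n, ∑ l : Fin n, (if k = l then 0 else p k * A k l))
      = (∑ k, ∑ l, p k * A k l) - ∑ k, p k * d k ^ 2 := by
    have : ∀ k : Fin n, (∑ l : Fin n, (if k = l then 0 else p k * A k l))
        = (∑ l, p k * A k l) - p k * A k k := by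
      intro k
      have : (∑ l : Fin n, (if k = l then 0 else p k * A k l))
          = ∑ l : Fin n, (p k * A k l - if k = l then p k * A k l else 0) := by
        refine Finset.sum_congr rfl fun l _ => ?_
        by_cases h : k = l <;> simp [h]
      rw [this, Finset.sum_sub_distrib, Finset.sum_ite_eq, if_pos (Finset.mem_univ k)]
    simp only [this, hAd, Finset.sum_sub_distrib]
  have hcs : (∑ k, p k * d k) ^ 2 ≤ ∑ k, p k * d k ^ 2 := by
    have h := Finset.sum_mul_sq_le_sq_mul_sq Finset.univ
      (fun k => Real.sqrt (p k)) (fun k => Real.sqrt (p k) * d k)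
    have e1 : (∑ k, Real.sqrt (p k) * (Real.sqrt (p k) * d k)) = ∑ k, p k * d k := by
      refine Finset.sum_congr rfl fun k _ => ?_
      rw [← mul_assoc, Real.mul_self_sqrt (hp k)]
    have e2 : (∑ k, Real.sqrt (p k) ^ 2) = ∑ k, p k := by
      refine Finset.sum_congr rfl fun k _ => ?_
      rw [Real.sq_sqrt (hp k)]
    have e3 : (∑ k, (Real.sqrt (p k) * d k) ^ 2) = ∑ k, p k * d k ^ 2 := by
      refine Finset.sum_congr rfl fun k _ => ?_
      rw [mul_pow, Real.sq_sqrt (hp k)]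
    rw [e1, e2, e3, hsum_p, one_mul] at h
    exact h
  nlinarith [hsum1, hsplit, hdiagsum, hcs]
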